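/- arXiv:2410.21821 — 4 statements merged into one kernel-verified Lean document; each statement's English description precedes it below -/
import Mathlib

section
/- (Barbalat's lemma) If f : [0,∞) → ℝ is uniformly continuous and the improper integral ∫₀^∞ f(σ) dσ exists and is finite, then f(t) → 0 as t → ∞. -/
open Filter MeasureTheory intervalIntegral
open scoped Topology

/-- Barbalat's lemma: if `f` is uniformly continuous on `[0,∞)` and the improper
integral `∫₀^∞ f` exists (the integrals `∫₀^t f` converge to a finite limit `L`
as `t → ∞`), then `f t → 0` as `t → ∞`. -/
theorem barbalat (f : ℝ → ℝ) (hf : UniformContinuousOn f (Set.Ici 0))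
    (L : ℝ)
    (hL : Tendsto (fun t => ∫ σ in (0:ℝ)..t, f σ) atTop (𝓝 L)) :
    Tendsto f atTop (𝓝 0) := by
  by_contra hcon
  have hfc : ContinuousOn f (Set.Ici 0) := hf.continuousOn
  have hint : ∀ a b : ℝ, 0 ≤ a → 0 ≤ b → IntervalIntegrable f volume a b := by
    intro a b ha hb
    apply (hfc.mono ?_).intervalIntegrable
    intro x hx
    exact le_trans (le_min ha hb) hx.1
  rw [Metric.tendsto_atTop] at hcon
  push_neg at hcon
  obtain ⟨ε, hε, hcon⟩ := hcon
  rw [Metric.uniformContinuousOn_iff] at hf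
  obtain ⟨δ, hδ, hδ'⟩ := hf (ε/2) (by positivity)
  set c := δ/2 with hc
  have hcpos : 0 < c := by positivity
  have hg : Tendsto (fun t => ∫ σ in t..(t+c), f σ) atTop (𝓝 0) := by
    have h1 : Tendsto (fun t => (∫ σ in (0:ℝ)..(t+c), f σ) - ∫ σ in (0:ℝ)..t, f σ)
        atTop (𝓝 (L - L)) :=
      (hL.comp (tendsto_atTop_add_const_right _ c tendsto_id)).sub hL
    rw [sub_self] at h1
    apply h1.congr'
    filter_upwards [eventually_ge_atTop (0:ℝ)] with t ht
    have htc : (0:ℝ) ≤ t + c := by linarith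
    rw [← intervalIntegral.integral_add_adjacent_intervals (hint 0 t le_rfl ht)
      (hint t (t+c) ht htc)]
    ring
  rw [Metric.tendsto_atTop] at hg
  obtain ⟨N, hN⟩ := hg (ε/2 * c) (by positivity)
  obtain ⟨t₀, ht₀, hft₀⟩ := hcon (max N 0)
  have ht₀0 : (0:ℝ) ≤ t₀ := le_trans (le_max_right _ _) ht₀
  have hNt : N ≤ t₀ := le_trans (le_max_left _ _) ht₀
  have hsmall := hN t₀ hNt
  rw [Real.dist_eq, sub_zero] at hsmall hft₀
  have hpt : ∀ s ∈ Set.Icc t₀ (t₀ + c), |f s - f t₀| < ε/2 := by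
    intro s hs
    have hs0 : s ∈ Set.Ici (0:ℝ) := le_trans ht₀0 hs.1
    have hd : dist s t₀ < δ := by
      rw [Real.dist_eq, abs_of_nonneg (by linarith [hs.1])]
      have := hs.2
      rw [hc] at *
      linarith
    have := hδ' s hs0 t₀ (by exact ht₀0) hd
    rwa [Real.dist_eq] at this
  have hconst : IntervalIntegrable (fun _ : ℝ => ε/2) volume t₀ (t₀ + c) :=
    intervalIntegrable_const
  have hconst' : IntervalIntegrable (fun _ : ℝ => -(ε/2)) volume t₀ (t₀ + c) :=
    intervalIntegrable_const
  have hle : t₀ ≤ t₀ + c := by linarith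
  have hintt : IntervalIntegrable f volume t₀ (t₀ + c) := hint _ _ ht₀0 (by linarith)
  rcases le_abs'.mp hft₀ with hneg | hpos
  · -- f t₀ ≤ -ε
    have hub : (∫ σ in t₀..(t₀ + c), f σ) ≤ ∫ _ in t₀..(t₀ + c), -(ε/2) := by
      apply intervalIntegral.integral_mono_on hle hintt hconst'
      intro x hx
      have := hpt x hx
      have := abs_lt.mp this
      linarith [this.1, this.2]
    rw [intervalIntegral.integral_const] at hub
    simp only [add_sub_cancel_left, smul_eq_mul] at hub
    have := neg_abs_le (∫ σ in t₀..(t₀ + c), f σ)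
    nlinarith
  · -- ε ≤ f t₀
    have hlb : (∫ _ in t₀..(t₀ + c), ε/2) ≤ ∫ σ in t₀..(t₀ + c), f σ := by
      apply intervalIntegral.integral_mono_on hle hconst hintt
      intro x hx
      have := abs_lt.mp (hpt x hx)
      linarith [this.1, this.2]
    rw [intervalIntegral.integral_const] at hlb
    simp only [add_sub_cancel_left, smul_eq_mul] at hlb
    have := le_abs_self (∫ σ in t₀..(t₀ + c), f σ)
    nlinarith
end

section
/- Let X be the fundamental matrix of the linear delay system x'(t) = A₀ x(t) + Σ_{j=1}^m A_j x(t-τ_j). If the matrix A₀ + Σ_j A_j is invertible and ∫₀^∞ X(σ) dσ = -(A₀ + Σ_j A_j)^{-1}, then X(t) → 0 as t → ∞. -/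
open Filter Set MeasureTheory intervalIntegral
open scoped Topology

attribute [local instance] Matrix.frobeniusNormedAddCommGroup Matrix.frobeniusNormedSpace

set_option maxHeartbeats 1000000 in
/-- Sufficiency direction of Theorem 1: if `A₀ + ∑ j, A j` is invertible and the
improper integral of the fundamental matrix equals `-(A₀ + ∑ j, A j)⁻¹`, then the
fundamental matrix tends to `0`, i.e. the delay system is asymptotically stable. -/
theorem tendsto_zero_of_integral_eq_neg_inv (n m : ℕ)
    (A₀ : Matrix (Fin n) (Fin n) ℝ) (A : Fin m → Matrix (Fin n) (Fin n) ℝ)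
    (τ : Fin m → ℝ) (hτ : ∀ j, 0 < τ j)
    (X X' : ℝ → Matrix (Fin n) (Fin n) ℝ)
    (hzero : ∀ t < (0:ℝ), X t = 0) (hinit : X 0 = 1)
    (hcont : ContinuousOn X (Ici 0))
    (hderiv : ∀ t ∈ Ici (0:ℝ), X' t = A₀ * X t + ∑ j, A j * X (t - τ j))
    (hderiv' : ∀ t ∈ Ioi (0:ℝ), HasDerivAt X (X' t) t)
    (hU : IsUnit (A₀ + ∑ j, A j))
    (hlim : Tendsto (fun t => ∫ σ in (0:ℝ)..t, X σ) atTop (𝓝 (-(A₀ + ∑ j, A j)⁻¹))) :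
    Tendsto X atTop (𝓝 0) := by
  letI : ENormedAddCommMonoid (Matrix (Fin n) (Fin n) ℝ) :=
    NormedAddCommGroup.toENormedAddCommMonoid
  letI : TopologicalSpace.PseudoMetrizableSpace (Matrix (Fin n) (Fin n) ℝ) :=
    inferInstanceAs (TopologicalSpace.PseudoMetrizableSpace (Fin n → Fin n → ℝ))
  set S : Matrix (Fin n) (Fin n) ℝ := A₀ + ∑ j, A j with hS
  set L : Matrix (Fin n) (Fin n) ℝ := -S⁻¹ with hL
  -- left-multiplication as a continuous linear map
  let LB : Matrix (Fin n) (Fin n) ℝ →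
      (Matrix (Fin n) (Fin n) ℝ →L[ℝ] Matrix (Fin n) (Fin n) ℝ) :=
    fun B => LinearMap.toContinuousLinearMap (LinearMap.mulLeft ℝ B)
  have hLB : ∀ (B y : Matrix (Fin n) (Fin n) ℝ), LB B y = B * y := fun _ _ => rfl
  -- almost everywhere, t ≠ 0
  have hne : ∀ᵐ t : ℝ, t ≠ (0:ℝ) := by
    refine ae_iff.2 ?_
    simp [measure_singleton]
  -- X is interval integrable on every interval
  have hXint : ∀ a b : ℝ, IntervalIntegrable X volume a b := by
    have key : ∀ c : ℝ, 0 ≤ c → IntervalIntegrable X volume (-c) c := by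
      intro c hc
      have h1 : IntervalIntegrable X volume (-c) 0 := by
        rw [intervalIntegrable_iff_integrableOn_Ioc_of_le (neg_nonpos.2 hc)]
        refine (integrable_zero _ _ _).congr ?_
        filter_upwards [ae_restrict_mem measurableSet_Ioc, ae_restrict_of_ae hne] with
          t ht ht0
        exact (hzero t (lt_of_le_of_ne ht.2 ht0)).symm
      have h2 : IntervalIntegrable X volume 0 c := by
        apply ContinuousOn.intervalIntegrable
        refine hcont.mono ?_
        rw [uIcc_of_le hc]
        exact fun x hx => hx.1
      exact h1.trans h2
    intro a b
    have hc : 0 ≤ max |a| |b| := le_trans (abs_nonneg a) (le_max_left _ _)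
    refine (key _ hc).mono_set ?_
    have h1 : a ∈ uIcc (-(max |a| |b|)) (max |a| |b|) := by
      rw [uIcc_of_le (neg_le_self hc)]
      constructor
      · exact le_trans (neg_le_neg (le_max_left |a| |b|)) (neg_abs_le a)
      · exact le_trans (le_abs_self a) (le_max_left _ _)
    have h2 : b ∈ uIcc (-(max |a| |b|)) (max |a| |b|) := by
      rw [uIcc_of_le (neg_le_self hc)]
      constructor
      · exact le_trans (neg_le_neg (le_max_right |a| |b|)) (neg_abs_le b)
      · exact le_trans (le_abs_self b) (le_max_right _ _)
    exact uIcc_subset_uIcc h1 h2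
  -- multiplication by a constant preserves interval integrability
  have hmulint : ∀ (B : Matrix (Fin n) (Fin n) ℝ) (f : ℝ → Matrix (Fin n) (Fin n) ℝ)
      (a b : ℝ), IntervalIntegrable f volume a b →
      IntervalIntegrable (fun σ => B * f σ) volume a b := by
    intro B f a b hf
    rw [intervalIntegrable_iff] at hf ⊢
    exact (LB B).integrable_comp hf
  -- the shifted integral identity
  have hshift : ∀ j : Fin m, ∀ t : ℝ,
      (∫ σ in (0:ℝ)..t, X (σ - τ j)) = ∫ σ in (0:ℝ)..(t - τ j), X σ := by
    intro j t
    rw [intervalIntegral.integral_comp_sub_right X (τ j), zero_sub]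
    have hzero' : (∫ σ in (-τ j)..(0:ℝ), X σ) = 0 := by
      rw [← intervalIntegral.integral_zero (a := -τ j) (b := (0:ℝ))
        (E := Matrix (Fin n) (Fin n) ℝ)]
      apply intervalIntegral.integral_congr_ae
      filter_upwards [hne] with σ hσ h
      rw [uIoc_of_le (neg_nonpos.2 (hτ j).le)] at h
      exact hzero σ (lt_of_le_of_ne h.2 hσ)
    have := intervalIntegral.integral_add_adjacent_intervals
      (hXint (-τ j) 0) (hXint 0 (t - τ j))
    rw [hzero', zero_add] at this
    exact this.symm
  -- FTC representation of X for t > 0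
  have hXt : ∀ t : ℝ, 0 < t →
      X t = 1 + (A₀ * ∫ σ in (0:ℝ)..t, X σ)
        + ∑ j, A j * ∫ σ in (0:ℝ)..(t - τ j), X σ := by
    intro t ht
    set g : ℝ → Matrix (Fin n) (Fin n) ℝ :=
      fun σ => A₀ * X σ + ∑ j, A j * X (σ - τ j) with hg
    have hintshift : ∀ j : Fin m, IntervalIntegrable (fun σ => X (σ - τ j)) volume 0 t := by
      intro j
      have := (hXint (-τ j) (t - τ j)).comp_sub_right (τ j)
      simpa using this
    have hintsum : IntervalIntegrable (fun σ => ∑ j, A j * X (σ - τ j)) volume 0 t := by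
      have h2 : (fun σ => ∑ j, A j * X (σ - τ j))
          = ∑ j, (fun σ => A j * X (σ - τ j)) := by funext σ; simp
      rw [h2]
      exact IntervalIntegrable.sum _ fun j _ => hmulint (A j) _ 0 t (hintshift j)
    have hintg : IntervalIntegrable g volume 0 t :=
      (hmulint A₀ X 0 t (hXint 0 t)).add hintsum
    have hintX' : IntervalIntegrable X' volume 0 t := by
      rw [intervalIntegrable_iff_integrableOn_Ioc_of_le ht.le] at hintg ⊢
      exact hintg.congr_fun (fun x hx => (hderiv x (le_of_lt hx.1)).symm) measurableSet_Ioc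
    have hftc : (∫ σ in (0:ℝ)..t, X' σ) = X t - X 0 := by
      refine intervalIntegral.integral_eq_sub_of_hasDeriv_right_of_le ht.le
        (hcont.mono fun x hx => hx.1) (fun x hx => (hderiv' x hx.1).hasDerivWithinAt) hintX'
    have heq : (∫ σ in (0:ℝ)..t, X' σ) = ∫ σ in (0:ℝ)..t, g σ := by
      apply intervalIntegral.integral_congr
      intro x hx
      rw [uIcc_of_le ht.le] at hx
      exact hderiv x hx.1
    have hmul : ∀ (B : Matrix (Fin n) (Fin n) ℝ) (f : ℝ → Matrix (Fin n) (Fin n) ℝ),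
        IntervalIntegrable f volume 0 t →
        (∫ σ in (0:ℝ)..t, B * f σ) = B * ∫ σ in (0:ℝ)..t, f σ := by
      intro B f hf
      have := (LB B).intervalIntegral_comp_comm hf
      exact this
    have hsplit : (∫ σ in (0:ℝ)..t, g σ)
        = (A₀ * ∫ σ in (0:ℝ)..t, X σ) + ∑ j, A j * ∫ σ in (0:ℝ)..(t - τ j), X σ := by
      rw [hg]
      rw [intervalIntegral.integral_add (hmulint A₀ X 0 t (hXint 0 t)) hintsum]
      rw [hmul A₀ X (hXint 0 t)]
      congr 1
      rw [intervalIntegral.integral_finset_sum fun j _ => hmulint (A j) _ 0 t (hintshift j)]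
      refine Finset.sum_congr rfl fun j _ => ?_
      rw [hmul (A j) _ (hintshift j), hshift j t]
    have hXtsub : X t - X 0 = (A₀ * ∫ σ in (0:ℝ)..t, X σ)
        + ∑ j, A j * ∫ σ in (0:ℝ)..(t - τ j), X σ := by
      rw [← hftc, heq, hsplit]
    rw [hinit] at hXtsub
    have := congrArg (fun y => 1 + y) hXtsub
    simpa [add_sub_cancel, add_assoc] using this
  -- the limits of the shifted integrals
  have hlim' : ∀ j : Fin m,
      Tendsto (fun t => ∫ σ in (0:ℝ)..(t - τ j), X σ) atTop (𝓝 L) := by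
    intro j
    exact hlim.comp (tendsto_atTop_add_const_right atTop (-(τ j)) tendsto_id |>.congr
      (fun t => by simp [sub_eq_add_neg]))
  have hmullim : ∀ (B : Matrix (Fin n) (Fin n) ℝ) (f : ℝ → Matrix (Fin n) (Fin n) ℝ),
      Tendsto f atTop (𝓝 L) → Tendsto (fun t => B * f t) atTop (𝓝 (B * L)) := by
    intro B f hf
    have := ((LB B).continuous.tendsto L).comp hf
    exact this
  have htend : Tendsto (fun t => 1 + (A₀ * ∫ σ in (0:ℝ)..t, X σ)
      + ∑ j, A j * ∫ σ in (0:ℝ)..(t - τ j), X σ) atTop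
      (𝓝 (1 + A₀ * L + ∑ j, A j * L)) := by
    refine Tendsto.add (Tendsto.add tendsto_const_nhds ?_) ?_
    · exact hmullim A₀ _ hlim
    · exact tendsto_finset_sum _ fun j _ => hmullim (A j) _ (hlim' j)
  have hzero_lim : (1 : Matrix (Fin n) (Fin n) ℝ) + A₀ * L + ∑ j, A j * L = 0 := by
    have hdet : IsUnit S.det := (Matrix.isUnit_iff_isUnit_det S).1 hU
    have hSS : S * S⁻¹ = 1 := Matrix.mul_nonsing_inv S hdet
    have hsum : A₀ * L + ∑ j, A j * L = S * L := by
      rw [hS, add_mul, Finset.sum_mul]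
    rw [add_assoc, hsum, hL, mul_neg, hSS]
    simp
  rw [← hzero_lim]
  refine Tendsto.congr' ?_ htend
  filter_upwards [eventually_gt_atTop (0:ℝ)] with t ht
  exact (hXt t ht).symm
end

section
/- Let X be the fundamental matrix of x'(t) = A₀ x(t) + Σ_{j=1}^m A_j x(t-τ_j). If X(t) → 0 as t → ∞ and the improper integral ∫₀^∞ X(σ) dσ converges, then (A₀ + Σ_j A_j) ∫₀^∞ X(σ) dσ = -I. -/
open Filter Set MeasureTheory intervalIntegral
open scoped Topology

attribute [local instance] Matrix.frobeniusNormedAddCommGroup Matrix.frobeniusNormedSpace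

noncomputable instance matFrobENormedAddCommMonoid (n : ℕ) :
    ENormedAddCommMonoid (Matrix (Fin n) (Fin n) ℝ) :=
  @NormedAddCommGroup.toENormedAddCommMonoid _ Matrix.frobeniusNormedAddCommGroup

instance matPseudoMetrizable (n : ℕ) :
    TopologicalSpace.PseudoMetrizableSpace (Matrix (Fin n) (Fin n) ℝ) :=
  inferInstanceAs (TopologicalSpace.PseudoMetrizableSpace (Fin n → Fin n → ℝ))

/-- Left multiplication by a fixed matrix, as a continuous linear map. -/
noncomputable def mulCLMaux (n : ℕ) (M : Matrix (Fin n) (Fin n) ℝ) :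
    Matrix (Fin n) (Fin n) ℝ →L[ℝ] Matrix (Fin n) (Fin n) ℝ :=
  (LinearMap.mulLeft ℝ M).toContinuousLinearMap

lemma mulCLMaux_apply (n : ℕ) (M B : Matrix (Fin n) (Fin n) ℝ) :
    mulCLMaux n M B = M * B := rfl

set_option maxHeartbeats 1000000

/-- Necessity direction of Theorem 1 (lemma of Győri et al.): if the fundamental matrix
tends to `0` and its improper integral converges to `L`, then `(A₀ + ∑ j, A j) * L = -I`. -/
theorem sum_mul_integral_eq_neg_one (n m : ℕ)
    (A₀ : Matrix (Fin n) (Fin n) ℝ) (A : Fin m → Matrix (Fin n) (Fin n) ℝ)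
    (τ : Fin m → ℝ) (hτ : ∀ j, 0 < τ j)
    (X X' : ℝ → Matrix (Fin n) (Fin n) ℝ)
    (hzero : ∀ t < (0:ℝ), X t = 0) (hinit : X 0 = 1)
    (hcont : ContinuousOn X (Ici 0))
    (hderiv : ∀ t ∈ Ici (0:ℝ), X' t = A₀ * X t + ∑ j, A j * X (t - τ j))
    (hderiv' : ∀ t ∈ Ioi (0:ℝ), HasDerivAt X (X' t) t)
    (hX0 : Tendsto X atTop (𝓝 0))
    (L : Matrix (Fin n) (Fin n) ℝ)
    (hlim : Tendsto (fun t => ∫ σ in (0:ℝ)..t, X σ) atTop (𝓝 L)) :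
    (A₀ + ∑ j, A j) * L = -1 := by
  classical
  -- left multiplication as a continuous linear map
  -- X equals the indicator of `Ici 0`
  have hXind : X = Set.indicator (Ici 0) X := by
    funext t
    by_cases ht : (0:ℝ) ≤ t
    · simp [Set.indicator_of_mem, mem_Ici.mpr ht]
    · simp [Set.indicator_of_notMem, mem_Ici, ht, hzero t (lt_of_not_ge ht)]
  -- X is interval-integrable on every interval
  have hXint : ∀ a b : ℝ, IntervalIntegrable X volume a b := by
    intro a b
    have hI : IntegrableOn X (uIcc a b) volume := by
      rw [hXind]
      rw [IntegrableOn, integrable_indicator_iff measurableSet_Ici]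
      have hset : Ici (0:ℝ) ∩ uIcc a b = Icc (max (min a b) 0) (max a b) := by
        rw [uIcc]
        ext x
        simp only [mem_inter_iff, mem_Ici, mem_Icc, max_le_iff]
        tauto
      rw [IntegrableOn, Measure.restrict_restrict measurableSet_Ici, hset]
      exact (hcont.mono (fun x hx => le_trans (le_max_right _ _) hx.1)).integrableOn_compact
        isCompact_Icc
    exact hI.intervalIntegrable
  have hXshift : ∀ (c a b : ℝ), IntervalIntegrable (fun s => X (s - c)) volume a b := by
    intro c a b
    simpa using (hXint (a - c) (b - c)).comp_sub_right c
  have hmulint : ∀ (M : Matrix (Fin n) (Fin n) ℝ) (f : ℝ → Matrix (Fin n) (Fin n) ℝ) (a b : ℝ),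
      IntervalIntegrable f volume a b → IntervalIntegrable (fun x => M * f x) volume a b := by
    intro M f a b hf
    have h1 : IntervalIntegrable (fun x => mulCLMaux n M (f x)) volume a b :=
      ⟨(mulCLMaux n M).integrable_comp hf.1, (mulCLMaux n M).integrable_comp hf.2⟩
    simpa [mulCLMaux_apply _] using h1
  -- the right-hand side of the ODE
  set g : ℝ → Matrix (Fin n) (Fin n) ℝ :=
    fun t => A₀ * X t + ∑ j, A j * X (t - τ j) with hg
  have hsumint : ∀ a b : ℝ,
      IntervalIntegrable (fun t => ∑ j, A j * X (t - τ j)) volume a b := by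
    intro a b
    have h := IntervalIntegrable.sum (μ := volume) (a := a) (b := b)
      (f := fun j t => A j * X (t - τ j)) Finset.univ
      (fun j _ => hmulint (A j) _ a b (hXshift (τ j) a b))
    have he : (∑ x : Fin m, fun t => A x * X (t - τ x))
        = fun t => ∑ j : Fin m, A j * X (t - τ j) := by
      funext t; simp
    rwa [he] at h
  have hgint : ∀ a b : ℝ, IntervalIntegrable g volume a b := by
    intro a b
    exact (hmulint A₀ X a b (hXint a b)).add (hsumint a b)
  -- fundamental theorem of calculus on [0, t]
  have hFTC : ∀ t : ℝ, 0 ≤ t → (∫ σ in (0:ℝ)..t, g σ) = X t - 1 := by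
    intro t ht
    have hX'int : IntervalIntegrable X' volume 0 t := by
      rw [intervalIntegrable_iff_integrableOn_Ioc_of_le ht]
      exact (hgint 0 t).1.congr_fun
        (fun x hx => (hderiv x (le_of_lt hx.1)).symm) measurableSet_Ioc
    have h1 : (∫ σ in (0:ℝ)..t, X' σ) = X t - X 0 :=
      integral_eq_sub_of_hasDeriv_right_of_le ht
        (hcont.mono (fun x hx => hx.1))
        (fun x hx => (hderiv' x hx.1).hasDerivWithinAt) hX'int
    have h2 : (∫ σ in (0:ℝ)..t, X' σ) = ∫ σ in (0:ℝ)..t, g σ := by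
      apply intervalIntegral.integral_congr
      intro x hx
      rw [uIcc_of_le ht] at hx
      exact hderiv x hx.1
    rw [← h2, h1, hinit]
  -- the shifted integral: ∫₀ᵗ X(σ - τ) dσ = ∫₀^{t-τ} X
  have hshift : ∀ (c t : ℝ), 0 < c →
      (∫ σ in (0:ℝ)..t, X (σ - c)) = ∫ σ in (0:ℝ)..(t - c), X σ := by
    intro c t hc
    rw [intervalIntegral.integral_comp_sub_right X c, zero_sub]
    have hzero' : (∫ σ in (-c)..(0:ℝ), X σ) = 0 := by
      have hae : ∀ᵐ x : ℝ, x ∈ Set.uIoc (-c) (0:ℝ) → X x = 0 := by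
        have h0 : ∀ᵐ x : ℝ, x ≠ (0:ℝ) := by
          rw [ae_iff]
          simp [Real.volume_singleton]
        filter_upwards [h0] with x hx hxmem
        rw [uIoc_of_le (by linarith)] at hxmem
        exact hzero x (lt_of_le_of_ne hxmem.2 hx)
      calc (∫ σ in (-c)..(0:ℝ), X σ) = ∫ σ in (-c)..(0:ℝ), (0:Matrix (Fin n) (Fin n) ℝ) :=
            intervalIntegral.integral_congr_ae hae
        _ = 0 := intervalIntegral.integral_zero
    have := intervalIntegral.integral_add_adjacent_intervals
      (hXint (-c) 0) (hXint 0 (t - c))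
    rw [hzero', zero_add] at this
    exact this.symm
  -- key identity for t ≥ 0
  have hkey : ∀ t : ℝ, 0 ≤ t →
      X t - 1 = A₀ * (∫ σ in (0:ℝ)..t, X σ)
        + ∑ j, A j * (∫ σ in (0:ℝ)..(t - τ j), X σ) := by
    intro t ht
    rw [← hFTC t ht, hg]
    rw [intervalIntegral.integral_add (hmulint A₀ X 0 t (hXint 0 t)) (hsumint 0 t)]
    rw [intervalIntegral.integral_finset_sum
      (fun j _ => hmulint (A j) _ 0 t (hXshift (τ j) 0 t))]
    congr 1
    · have := (mulCLMaux n A₀).intervalIntegral_comp_comm (hXint 0 t)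
      exact this
    · apply Finset.sum_congr rfl
      intro j _
      have h1 := (mulCLMaux n (A j)).intervalIntegral_comp_comm (hXshift (τ j) 0 t)
      change (∫ x in (0:ℝ)..t, A j * X (x - τ j)) = A j * ∫ x in (0:ℝ)..t, X (x - τ j) at h1
      rw [h1, hshift (τ j) t (hτ j)]
  -- take limits
  set F : ℝ → Matrix (Fin n) (Fin n) ℝ := fun t => ∫ σ in (0:ℝ)..t, X σ with hF
  have hlhs : Tendsto (fun t => X t - 1) atTop
      (𝓝 (-1 : Matrix (Fin n) (Fin n) ℝ)) := by
    have := hX0.sub (tendsto_const_nhds (x := (1 : Matrix (Fin n) (Fin n) ℝ)))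
    simpa using this
  have hrhs : Tendsto (fun t => A₀ * F t + ∑ j, A j * F (t - τ j)) atTop
      (𝓝 (A₀ * L + ∑ j, A j * L)) := by
    have hmultend : ∀ (M : Matrix (Fin n) (Fin n) ℝ) (u : ℝ → ℝ),
        Tendsto u atTop atTop →
        Tendsto (fun t => M * F (u t)) atTop (𝓝 (M * L)) := by
      intro M u hu
      have h1 : Tendsto (fun t => F (u t)) atTop (𝓝 L) := hlim.comp hu
      have h2 := ((mulCLMaux n M).continuous.tendsto L).comp h1
      simpa [mulCLMaux_apply _, Function.comp_def] using h2
    exact (hmultend A₀ id tendsto_id).add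
      (tendsto_finset_sum _ fun j _ =>
        hmultend (A j) (fun t => t - τ j) (tendsto_atTop_add_const_right _ _ tendsto_id))
  have heq : (fun t => X t - 1) =ᶠ[atTop]
      (fun t => A₀ * F t + ∑ j, A j * F (t - τ j)) := by
    filter_upwards [eventually_ge_atTop (0:ℝ)] with t ht
    exact hkey t ht
  have := tendsto_nhds_unique (hlhs.congr' heq) hrhs
  rw [add_mul, Finset.sum_mul]
  exact this.symm
end

section
/- Let X be the fundamental matrix of the delay system. If ∫₀^∞ ‖X(σ)‖_F² dσ exists and is finite, then each entry X_{ij}(t) is bounded on [0,∞). More precisely, for all t ≥ 0, |X_{ij}(t)² - X_{ij}(0)²| ≤ 2 Σ_k (|a_{ik}| + Σ_l |a_{ik}^{(l)}|)(∫₀^∞ X_{ij}(σ)² dσ + ∫₀^∞ X_{kj}(σ)² dσ), where A₀ = (a_{ik}) and A_l = (a_{ik}^{(l)}). -/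
open Filter Set MeasureTheory
open scoped Topology

/-- If `∫₀^∞ ‖X(σ)‖_F² dσ` is finite (here expressed entrywise as integrability of
`∑ i j, X(σ)ᵢⱼ²`), then each entry of the fundamental matrix satisfies the bound
`|Xᵢⱼ(t)² - Xᵢⱼ(0)²| ≤ 2 ∑ₖ (|a_{ik}| + ∑ₗ |a_{ik}^{(l)}|)(∫₀^∞ Xᵢⱼ² + ∫₀^∞ X_{kj}²)`,
so each entry is bounded on `[0,∞)`. -/
theorem entry_sq_bound_of_l2 (n m : ℕ)
    (A₀ : Matrix (Fin n) (Fin n) ℝ) (A : Fin m → Matrix (Fin n) (Fin n) ℝ)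
    (τ : Fin m → ℝ) (hτ : ∀ l, 0 < τ l)
    (X X' : ℝ → Matrix (Fin n) (Fin n) ℝ)
    (hzero : ∀ t < (0:ℝ), X t = 0) (hinit : X 0 = 1)
    (hcont : ∀ i j, ContinuousOn (fun t => X t i j) (Ici 0))
    (hderiv : ∀ t ∈ Ici (0:ℝ), X' t = A₀ * X t + ∑ l, A l * X (t - τ l))
    (hderiv' : ∀ i j, ∀ t ∈ Ioi (0:ℝ), HasDerivAt (fun s => X s i j) (X' t i j) t)
    (hint : IntegrableOn (fun σ => ∑ i, ∑ j, X σ i j ^ 2) (Ici 0)) :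
    (∀ i j, ∀ t ∈ Ici (0:ℝ),
      |X t i j ^ 2 - X 0 i j ^ 2| ≤
        2 * ∑ k, (|A₀ i k| + ∑ l, |A l i k|) *
          ((∫ σ in Ici (0:ℝ), X σ i j ^ 2) + ∫ σ in Ici (0:ℝ), X σ k j ^ 2)) ∧
    ∀ i j, ∃ C, ∀ t ∈ Ici (0:ℝ), |X t i j| ≤ C := by
  have key : ∀ i j, ∀ t ∈ Ici (0:ℝ),
      |X t i j ^ 2 - X 0 i j ^ 2| ≤
        2 * ∑ k, (|A₀ i k| + ∑ l, |A l i k|) *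
          ((∫ σ in Ici (0:ℝ), X σ i j ^ 2) + ∫ σ in Ici (0:ℝ), X σ k j ^ 2) := by
    intro i j t ht
    simp only [mem_Ici] at ht
    -- indicator representation
    have hind : ∀ k, (fun s => X s k j) = (Ici (0:ℝ)).indicator (fun s => X s k j) := by
      intro k
      funext s
      by_cases hs : (0:ℝ) ≤ s
      · rw [Set.indicator_of_mem (mem_Ici.2 hs)]
      · rw [Set.indicator_of_notMem (by simpa using hs), hzero s (lt_of_not_ge hs)]
        simp
    have hsq_eq : ∀ k, (fun s => X s k j ^ 2)
        = (Ici (0:ℝ)).indicator (fun s => X s k j ^ 2) := by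
      intro k
      funext s
      by_cases hs : (0:ℝ) ≤ s
      · rw [Set.indicator_of_mem (mem_Ici.2 hs)]
      · rw [Set.indicator_of_notMem (by simpa using hs), hzero s (lt_of_not_ge hs)]
        simp
    have hmeas : ∀ k, AEMeasurable (fun s => X s k j) volume := by
      intro k
      rw [hind k]
      exact (aemeasurable_indicator_iff measurableSet_Ici).2
        ((hcont k j).aemeasurable measurableSet_Ici)
    have hsqm : ∀ k, AEMeasurable (fun s => X s k j ^ 2) volume := by
      intro k
      simpa [pow_two] using (hmeas k).fun_mul (hmeas k)
    -- each squared entry is integrable on `Ici 0`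
    have hsq_int_on : ∀ k, IntegrableOn (fun s => X s k j ^ 2) (Ici 0) := by
      intro k
      refine hint.mono' ((hsqm k).aestronglyMeasurable.restrict) ?_
      refine ae_of_all _ fun s => ?_
      have h1 : X s k j ^ 2 ≤ ∑ b, X s k b ^ 2 :=
        Finset.single_le_sum (f := fun b => X s k b ^ 2)
          (fun b _ => sq_nonneg _) (Finset.mem_univ j)
      have h2 : ∑ b, X s k b ^ 2 ≤ ∑ a, ∑ b, X s a b ^ 2 :=
        Finset.single_le_sum (f := fun a => ∑ b, X s a b ^ 2)
          (fun a _ => Finset.sum_nonneg fun b _ => sq_nonneg _) (Finset.mem_univ k)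
      have := h1.trans h2
      simpa [Real.norm_eq_abs, abs_of_nonneg (sq_nonneg (X s k j))] using this
    have hsq_int : ∀ k, Integrable (fun s => X s k j ^ 2) volume := by
      intro k
      rw [hsq_eq k, integrable_indicator_iff measurableSet_Ici]
      exact hsq_int_on k
    have hshift_int : ∀ k l, Integrable (fun s => X (s - τ l) k j ^ 2) volume :=
      fun k l => (hsq_int k).comp_sub_right (τ l)
    set I : Fin n → ℝ := fun k => ∫ σ in Ici (0:ℝ), X σ k j ^ 2 with hI
    have hInonneg : ∀ k, 0 ≤ I k :=
      fun k => setIntegral_nonneg measurableSet_Ici fun _ _ => sq_nonneg _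
    -- interval integral bounds
    have hIoc : ∀ k, (∫ s in (0:ℝ)..t, X s k j ^ 2) ≤ I k := by
      intro k
      rw [intervalIntegral.integral_of_le ht]
      exact setIntegral_mono_set (hsq_int_on k)
        (ae_of_all _ fun s => sq_nonneg _)
        (HasSubset.Subset.eventuallyLE (fun x hx => hx.1.le))
    have hIocShift : ∀ k l, (∫ s in (0:ℝ)..t, X (s - τ l) k j ^ 2) ≤ I k := by
      intro k l
      rw [intervalIntegral.integral_comp_sub_right (fun s => X s k j ^ 2) (τ l)]
      have hle : (0:ℝ) - τ l ≤ t - τ l := by linarith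
      rw [intervalIntegral.integral_of_le hle]
      have h1 : (∫ s in Ioc (0 - τ l) (t - τ l), X s k j ^ 2)
          = ∫ s in Ioc (0 - τ l) (t - τ l) ∩ Ici 0, X s k j ^ 2 := by
        conv_lhs => rw [hsq_eq k]
        rw [setIntegral_indicator measurableSet_Ici]
      rw [h1]
      exact setIntegral_mono_set (hsq_int_on k)
        (ae_of_all _ fun s => sq_nonneg _)
        (HasSubset.Subset.eventuallyLE inter_subset_right)
    -- derivative of the squared entry
    set g : ℝ → ℝ := fun s => 2 * X s i j * X' s i j with hg
    have hφderiv : ∀ s ∈ Ioo (0:ℝ) t, HasDerivAt (fun u => X u i j ^ 2) (g s) s := by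
      intro s hs
      have h := (hderiv' i j s hs.1).fun_pow 2
      simpa [hg, pow_one] using h
    -- the explicit expression for g on `Ici 0`
    set e : ℝ → ℝ := fun s => 2 * X s i j *
        ((∑ k, A₀ i k * X s k j) + ∑ l, ∑ k, A l i k * X (s - τ l) k j) with he
    have hge : ∀ s, 0 ≤ s → g s = e s := by
      intro s hs
      have h1 := hderiv s hs
      have h2 : X' s i j = (∑ k, A₀ i k * X s k j) + ∑ l, ∑ k, A l i k * X (s - τ l) k j := by
        rw [h1]
        simp [Matrix.add_apply, Matrix.mul_apply, Matrix.sum_apply]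
      simp [hg, he, h2]
    -- the bounding function
    set h : ℝ → ℝ := fun s => (∑ k, |A₀ i k| * (X s i j ^ 2 + X s k j ^ 2))
        + ∑ l, ∑ k, |A l i k| * (X s i j ^ 2 + X (s - τ l) k j ^ 2) with hh
    have habs2 : ∀ a b c : ℝ, |2 * a * (c * b)| ≤ |c| * (a ^ 2 + b ^ 2) := by
      intro a b c
      have h1 : |2 * a * (c * b)| = |c| * (2 * (|a| * |b|)) := by
        rw [abs_mul, abs_mul, abs_mul, abs_two]; ring
      have h2 : 2 * (|a| * |b|) ≤ |a| ^ 2 + |b| ^ 2 := by nlinarith [sq_nonneg (|a| - |b|)]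
      rw [h1, ← sq_abs a, ← sq_abs b]
      exact mul_le_mul_of_nonneg_left h2 (abs_nonneg c)
    have hbound : ∀ s, 0 ≤ s → |g s| ≤ h s := by
      intro s hs
      rw [hge s hs]
      have hexp : e s = (∑ k, 2 * X s i j * (A₀ i k * X s k j))
          + ∑ l, ∑ k, 2 * X s i j * (A l i k * X (s - τ l) k j) := by
        simp [he, Finset.mul_sum, mul_add]
      rw [hexp]
      refine (abs_add_le _ _).trans (add_le_add ?_ ?_)
      · refine (Finset.abs_sum_le_sum_abs _ _).trans (Finset.sum_le_sum fun k _ => ?_)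
        exact habs2 _ _ _
      · refine (Finset.abs_sum_le_sum_abs _ _).trans (Finset.sum_le_sum fun l _ => ?_)
        refine (Finset.abs_sum_le_sum_abs _ _).trans (Finset.sum_le_sum fun k _ => ?_)
        exact habs2 _ _ _
    -- h is integrable
    have hh_int : Integrable h volume := by
      refine Integrable.add ?_ ?_
      · exact integrable_finset_sum _
          (fun k _ => (((hsq_int i).add (hsq_int k)).const_mul _))
      · exact integrable_finset_sum _ (fun l _ => integrable_finset_sum _
          (fun k _ => (((hsq_int i).add (hshift_int k l)).const_mul _)))
    -- g is interval integrable
    have he_meas : AEMeasurable e volume := by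
      refine AEMeasurable.mul (((hmeas i)).const_mul 2) (AEMeasurable.add ?_ ?_)
      · exact Finset.aemeasurable_fun_sum _ fun k _ => (hmeas k).const_mul _
      · refine Finset.aemeasurable_fun_sum _ fun l _ => Finset.aemeasurable_fun_sum _ fun k _ => ?_
        have := (hmeas k).comp_quasiMeasurePreserving
          (measurePreserving_sub_right volume (τ l)).quasiMeasurePreserving
        exact (this.const_mul _)
    have hg_meas : AEStronglyMeasurable g (volume.restrict (Ioc 0 t)) := by
      refine (he_meas.aestronglyMeasurable.restrict).congr ?_
      refine (ae_restrict_iff' measurableSet_Ioc).2 (ae_of_all _ fun s hs => ?_)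
      exact (hge s hs.1.le).symm
    have hg_int : IntervalIntegrable g volume 0 t := by
      rw [intervalIntegrable_iff_integrableOn_Ioc_of_le ht]
      refine (hh_int.integrableOn).mono' hg_meas ?_
      refine (ae_restrict_iff' measurableSet_Ioc).2 (ae_of_all _ fun s hs => ?_)
      simpa [Real.norm_eq_abs] using hbound s hs.1.le
    -- fundamental theorem of calculus
    have hFTC : (∫ s in (0:ℝ)..t, g s) = X t i j ^ 2 - X 0 i j ^ 2 :=
      intervalIntegral.integral_eq_sub_of_hasDerivAt_of_le ht
        (((hcont i j).mono Icc_subset_Ici_self).pow 2) hφderiv hg_int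
    have h1 : |X t i j ^ 2 - X 0 i j ^ 2| ≤ ∫ s in (0:ℝ)..t, h s := by
      rw [← hFTC]
      calc |∫ s in (0:ℝ)..t, g s| ≤ ∫ s in (0:ℝ)..t, |g s| :=
            intervalIntegral.abs_integral_le_integral_abs ht
        _ ≤ ∫ s in (0:ℝ)..t, h s := by
            refine intervalIntegral.integral_mono_on ht hg_int.abs
              hh_int.intervalIntegrable fun s hs => hbound s hs.1
    have h2 : (∫ s in (0:ℝ)..t, h s) ≤
        ∑ k, (|A₀ i k| + ∑ l, |A l i k|) * (I i + I k) := by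
      have hint1 : ∀ k : Fin n, Integrable
          (fun s => |A₀ i k| * (X s i j ^ 2 + X s k j ^ 2)) volume :=
        fun k => by exact ((hsq_int i).add (hsq_int k)).const_mul _
      have hint2 : ∀ (l : Fin m) (k : Fin n), Integrable
          (fun s => |A l i k| * (X s i j ^ 2 + X (s - τ l) k j ^ 2)) volume :=
        fun l k => by exact ((hsq_int i).add (hshift_int k l)).const_mul _
      have hsum1 : Integrable
          (fun s => ∑ k, |A₀ i k| * (X s i j ^ 2 + X s k j ^ 2)) volume := by
        exact integrable_finset_sum _ (fun k _ => hint1 k)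
      have hsum2i : ∀ l : Fin m, Integrable
          (fun s => ∑ k, |A l i k| * (X s i j ^ 2 + X (s - τ l) k j ^ 2)) volume :=
        fun l => by exact integrable_finset_sum _ (fun k _ => hint2 l k)
      have hsum2 : Integrable
          (fun s => ∑ l, ∑ k, |A l i k| * (X s i j ^ 2 + X (s - τ l) k j ^ 2)) volume := by
        exact integrable_finset_sum _ (fun l _ => hsum2i l)
      have hsplit : (∫ s in (0:ℝ)..t, h s)
          = (∑ k, ∫ s in (0:ℝ)..t, |A₀ i k| * (X s i j ^ 2 + X s k j ^ 2))
            + ∑ l, ∑ k, ∫ s in (0:ℝ)..t, |A l i k| * (X s i j ^ 2 + X (s - τ l) k j ^ 2) := by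
        have e1 : (∫ s in (0:ℝ)..t, h s)
            = (∫ s in (0:ℝ)..t, ∑ k, |A₀ i k| * (X s i j ^ 2 + X s k j ^ 2))
              + ∫ s in (0:ℝ)..t, ∑ l, ∑ k, |A l i k| * (X s i j ^ 2 + X (s - τ l) k j ^ 2) := by
          exact intervalIntegral.integral_add (hsum1.intervalIntegrable)
            (hsum2.intervalIntegrable)
        have e2 : (∫ s in (0:ℝ)..t, ∑ k, |A₀ i k| * (X s i j ^ 2 + X s k j ^ 2))
            = ∑ k, ∫ s in (0:ℝ)..t, |A₀ i k| * (X s i j ^ 2 + X s k j ^ 2) :=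
          intervalIntegral.integral_finset_sum (fun k _ => (hint1 k).intervalIntegrable)
        have e3 : (∫ s in (0:ℝ)..t, ∑ l, ∑ k, |A l i k| * (X s i j ^ 2 + X (s - τ l) k j ^ 2))
            = ∑ l, ∑ k, ∫ s in (0:ℝ)..t, |A l i k| * (X s i j ^ 2 + X (s - τ l) k j ^ 2) := by
          rw [intervalIntegral.integral_finset_sum (fun l _ => (hsum2i l).intervalIntegrable)]
          exact Finset.sum_congr rfl fun l _ =>
            intervalIntegral.integral_finset_sum (fun k _ => (hint2 l k).intervalIntegrable)
        rw [e1, e2, e3]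
      rw [hsplit]
      have hb1 : ∀ k : Fin n, (∫ s in (0:ℝ)..t, |A₀ i k| * (X s i j ^ 2 + X s k j ^ 2))
          ≤ |A₀ i k| * (I i + I k) := by
        intro k
        rw [intervalIntegral.integral_const_mul]
        refine mul_le_mul_of_nonneg_left ?_ (abs_nonneg _)
        rw [intervalIntegral.integral_add ((hsq_int i).intervalIntegrable)
          ((hsq_int k).intervalIntegrable)]
        exact add_le_add (hIoc i) (hIoc k)
      have hb2 : ∀ (l : Fin m) (k : Fin n),
          (∫ s in (0:ℝ)..t, |A l i k| * (X s i j ^ 2 + X (s - τ l) k j ^ 2))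
          ≤ |A l i k| * (I i + I k) := by
        intro l k
        rw [intervalIntegral.integral_const_mul]
        refine mul_le_mul_of_nonneg_left ?_ (abs_nonneg _)
        rw [intervalIntegral.integral_add ((hsq_int i).intervalIntegrable)
          ((hshift_int k l).intervalIntegrable)]
        exact add_le_add (hIoc i) (hIocShift k l)
      have hstep : (∑ k, ∫ s in (0:ℝ)..t, |A₀ i k| * (X s i j ^ 2 + X s k j ^ 2))
            + ∑ l, ∑ k, ∫ s in (0:ℝ)..t, |A l i k| * (X s i j ^ 2 + X (s - τ l) k j ^ 2)
          ≤ (∑ k, |A₀ i k| * (I i + I k)) + ∑ l, ∑ k, |A l i k| * (I i + I k) :=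
        add_le_add (Finset.sum_le_sum fun k _ => hb1 k)
          (Finset.sum_le_sum fun l _ => Finset.sum_le_sum fun k _ => hb2 l k)
      refine hstep.trans (le_of_eq ?_)
      rw [Finset.sum_comm]
      rw [← Finset.sum_add_distrib]
      refine Finset.sum_congr rfl fun k _ => ?_
      rw [add_mul, Finset.sum_mul]
    have h3 : ∑ k, (|A₀ i k| + ∑ l, |A l i k|) * (I i + I k)
        ≤ 2 * ∑ k, (|A₀ i k| + ∑ l, |A l i k|) * (I i + I k) := by
      have hnn : 0 ≤ ∑ k, (|A₀ i k| + ∑ l, |A l i k|) * (I i + I k) :=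
        Finset.sum_nonneg fun k _ => mul_nonneg
          (add_nonneg (abs_nonneg _) (Finset.sum_nonneg fun l _ => abs_nonneg _))
          (add_nonneg (hInonneg i) (hInonneg k))
      linarith
    exact h1.trans (h2.trans h3)
  refine ⟨key, ?_⟩
  intro i j
  refine ⟨Real.sqrt (X 0 i j ^ 2 + 2 * ∑ k, (|A₀ i k| + ∑ l, |A l i k|) *
      ((∫ σ in Ici (0:ℝ), X σ i j ^ 2) + ∫ σ in Ici (0:ℝ), X σ k j ^ 2)), ?_⟩
  intro t ht
  have h1 := key i j t ht
  have h2 : X t i j ^ 2 ≤ X 0 i j ^ 2 + 2 * ∑ k, (|A₀ i k| + ∑ l, |A l i k|) *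
      ((∫ σ in Ici (0:ℝ), X σ i j ^ 2) + ∫ σ in Ici (0:ℝ), X σ k j ^ 2) := by
    have := le_abs_self (X t i j ^ 2 - X 0 i j ^ 2)
    linarith
  calc |X t i j| = Real.sqrt (X t i j ^ 2) := (Real.sqrt_sq_eq_abs _).symm
    _ ≤ _ := Real.sqrt_le_sqrt h2
end
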